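/- arXiv:1012.3674 — 2 statements merged into one kernel-verified Lean document; each statement's English description precedes it below -/
import Mathlib

section
/- For all complex numbers z1, z2, we have χ(z1, z2) ≤ 2·d(z1, z2), where d(z1,z2) = |z1/(1+|z1|) - z2/(1+|z2|)| and χ(z1,z2) = |z1-z2|/(√(1+|z1|²)√(1+|z2|²)). -/
theorem stmt3 (z1 z2 : ℂ) :
    ‖z1 - z2‖ /
      (Real.sqrt (1 + ‖z1‖ ^ 2) * Real.sqrt (1 + ‖z2‖ ^ 2)) ≤
    2 * ‖z1 / (1 + ‖z1‖) - z2 / (1 + ‖z2‖)‖ := by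
  set a := ‖z1‖ with ha
  set b := ‖z2‖ with hb
  have ha0 : 0 ≤ a := norm_nonneg z1
  have hb0 : 0 ≤ b := norm_nonneg z2
  have h1a : (0:ℝ) < 1 + a := by linarith
  have h1b : (0:ℝ) < 1 + b := by linarith
  have hca : (1 + (a:ℂ)) ≠ 0 := by
    intro h
    have : (1:ℝ) + a = 0 := by simpa using congrArg Complex.re h
    linarith
  have hcb : (1 + (b:ℂ)) ≠ 0 := by
    intro h
    have : (1:ℝ) + b = 0 := by simpa using congrArg Complex.re h
    linarith
  -- rewrite difference of fractions
  have key : z1 / (1 + (a:ℂ)) - z2 / (1 + (b:ℂ))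
      = (z1 * (1 + (b:ℂ)) - z2 * (1 + (a:ℂ))) / ((1 + (a:ℂ)) * (1 + (b:ℂ))) := by
    field_simp
  set N : ℂ := z1 * (1 + (b:ℂ)) - z2 * (1 + (a:ℂ)) with hN
  -- |z1 - z2| ≤ |N|
  have hnum : ‖z1 - z2‖ ≤ ‖N‖ := by
    have hdecomp : N = (z1 - z2) * (1 + ((a+b)/2 : ℝ)) + (z1 + z2) * (((b-a)/2 : ℝ)) := by
      push_cast
      ring
    have h1 : ‖(z1 - z2) * (1 + ((a+b)/2 : ℝ))‖
        = ‖z1 - z2‖ * (1 + (a+b)/2) := by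
      rw [norm_mul]
      congr 1
      rw [show (1 + ((a+b)/2 : ℝ) : ℂ) = ((1 + (a+b)/2 : ℝ) : ℂ) by push_cast; ring,
        Complex.norm_real, Real.norm_eq_abs, abs_of_pos (by linarith)]
    have h2 : ‖(z1 + z2) * (((b-a)/2 : ℝ))‖
        ≤ (a + b) * (‖z1 - z2‖ / 2) := by
      rw [norm_mul, Complex.norm_real, Real.norm_eq_abs]
      have hab : ‖z1 + z2‖ ≤ a + b := norm_add_le z1 z2
      have hba : |(b - a)/2| ≤ ‖z1 - z2‖ / 2 := by
        rw [abs_div]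
        have : |b - a| ≤ ‖z1 - z2‖ := by
          have := abs_norm_sub_norm_le z2 z1
          simp only [← ha, ← hb] at this
          calc |b - a| ≤ ‖z2 - z1‖ := this
            _ = ‖z1 - z2‖ := by rw [← norm_neg]; ring_nf
        simp only [abs_two]
        linarith
      exact mul_le_mul hab hba (abs_nonneg _) (by linarith)
    have h3 : ‖(z1 - z2) * (1 + ((a+b)/2 : ℝ))‖
        - ‖(z1 + z2) * (((b-a)/2 : ℝ))‖ ≤ ‖N‖ := by
      rw [hdecomp]
      have := norm_sub_norm_le ((z1 - z2) * (1 + ((a+b)/2 : ℝ)))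
        (-((z1 + z2) * (((b-a)/2 : ℝ))))
      simpa [sub_neg_eq_add] using this
    have habs0 : 0 ≤ ‖z1 - z2‖ := norm_nonneg _
    nlinarith [h1, h2, h3]
  -- sqrt bound : (1+a)*(1+b) ≤ 2 * sqrt(1+a^2) * sqrt(1+b^2)
  have hsa : 1 + a ≤ Real.sqrt 2 * Real.sqrt (1 + a ^ 2) := by
    rw [← Real.sqrt_mul (by norm_num)]
    have : (1 + a)^2 ≤ 2 * (1 + a ^ 2) := by nlinarith [sq_nonneg (a-1)]
    calc 1 + a = Real.sqrt ((1+a)^2) := by rw [Real.sqrt_sq (by linarith)]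
      _ ≤ Real.sqrt (2 * (1 + a ^ 2)) := Real.sqrt_le_sqrt this
  have hsb : 1 + b ≤ Real.sqrt 2 * Real.sqrt (1 + b ^ 2) := by
    rw [← Real.sqrt_mul (by norm_num)]
    have : (1 + b)^2 ≤ 2 * (1 + b ^ 2) := by nlinarith [sq_nonneg (b-1)]
    calc 1 + b = Real.sqrt ((1+b)^2) := by rw [Real.sqrt_sq (by linarith)]
      _ ≤ Real.sqrt (2 * (1 + b ^ 2)) := Real.sqrt_le_sqrt this
  have hsq : (1 + a) * (1 + b) ≤ 2 * (Real.sqrt (1 + a ^ 2) * Real.sqrt (1 + b ^ 2)) := by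
    have h2 : Real.sqrt 2 * Real.sqrt 2 = 2 := Real.mul_self_sqrt (by norm_num)
    calc (1 + a) * (1 + b)
        ≤ (Real.sqrt 2 * Real.sqrt (1 + a ^ 2)) * (Real.sqrt 2 * Real.sqrt (1 + b ^ 2)) :=
          mul_le_mul hsa hsb (by linarith) (by positivity)
      _ = (Real.sqrt 2 * Real.sqrt 2) * (Real.sqrt (1 + a ^ 2) * Real.sqrt (1 + b ^ 2)) := by
          ring
      _ = 2 * (Real.sqrt (1 + a ^ 2) * Real.sqrt (1 + b ^ 2)) := by rw [h2]
  -- RHS computation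
  have hRHS : ‖z1 / (1 + (a:ℂ)) - z2 / (1 + (b:ℂ))‖
      = ‖N‖ / ((1 + a) * (1 + b)) := by
    rw [key, norm_div, norm_mul]
    congr 1
    rw [show (1 + (a:ℂ)) = ((1 + a : ℝ) : ℂ) by push_cast; ring,
      show (1 + (b:ℂ)) = ((1 + b : ℝ) : ℂ) by push_cast; ring,
      Complex.norm_real, Real.norm_eq_abs, Complex.norm_real, Real.norm_eq_abs, abs_of_pos h1a, abs_of_pos h1b]
  rw [hRHS]
  have hS : 0 < Real.sqrt (1 + a ^ 2) * Real.sqrt (1 + b ^ 2) := by positivity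
  have hP : 0 < (1 + a) * (1 + b) := by positivity
  rw [div_le_iff₀ hS]
  calc ‖z1 - z2‖
      = ‖z1 - z2‖ / ((1 + a) * (1 + b)) * ((1 + a) * (1 + b)) := by
        field_simp
    _ ≤ ‖N‖ / ((1 + a) * (1 + b)) * (2 * (Real.sqrt (1 + a ^ 2) * Real.sqrt (1 + b ^ 2))) := by
        apply mul_le_mul _ hsq hP.le (by positivity)
        gcongr
    _ = 2 * (‖N‖ / ((1 + a) * (1 + b))) * (Real.sqrt (1 + a ^ 2) * Real.sqrt (1 + b ^ 2)) := by
        ring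
end

section
/- Every continuous real-valued function θ : T → ℝ on the unit circle extends uniquely to a function on the closed unit disc D̄ that is continuous on D̄ and harmonic in the open disc D (via the Poisson integral). -/
/-- `u` is harmonic on `s`: twice continuously differentiable with vanishing Laplacian. -/
def HarmonicOn (u : ℂ → ℝ) (s : Set ℂ) : Prop :=
  ContDiffOn ℝ 2 u s ∧
    ∀ z ∈ s,
      fderiv ℝ (fun w => fderiv ℝ u w 1) z 1 +
        fderiv ℝ (fun w => fderiv ℝ u w Complex.I) z Complex.I = 0

open Complex Metric Set Filter Real intervalIntegral MeasureTheory
open scoped Topology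


/-- 1D second derivative test at a local max. -/
lemma oneD_second_nonpos {φ φd : ℝ → ℝ} {c : ℝ}
    (hmax : IsLocalMax φ 0) (hφ : ∀ᶠ s in 𝓝 (0:ℝ), HasDerivAt φ (φd s) s)
    (hd : HasDerivAt φd c 0) : c ≤ 0 := by
  by_contra hc
  push_neg at hc
  have h0 : φd 0 = 0 := hmax.hasDerivAt_eq_zero hφ.self_of_nhds
  have hslope : Tendsto (slope φd 0) (𝓝[≠] 0) (𝓝 c) :=
    hasDerivAt_iff_tendsto_slope.mp hd
  have hpos : ∀ᶠ s in 𝓝[≠] (0:ℝ), 0 < slope φd 0 s :=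
    hslope.eventually (eventually_gt_nhds hc)
  have hpos' : ∀ᶠ s in 𝓝 (0:ℝ), s ≠ 0 → 0 < slope φd 0 s :=
    eventually_nhdsWithin_iff.mp hpos
  have hall : ∀ᶠ s in 𝓝 (0:ℝ),
      (HasDerivAt φ (φd s) s ∧ φ s ≤ φ 0) ∧ (s ≠ 0 → 0 < slope φd 0 s) :=
    (hφ.and hmax).and hpos'
  obtain ⟨δ, hδpos, hδ⟩ := Metric.eventually_nhds_iff.mp hall
  set η := δ/2 with hη
  have hηpos : 0 < η := by positivity
  have hmem : ∀ s ∈ Icc (0:ℝ) η, dist s 0 < δ := by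
    intro s hs
    rw [Real.dist_eq, sub_zero, _root_.abs_of_nonneg hs.1]
    calc s ≤ η := hs.2
    _ < δ := by simp [hη]; linarith
  have hsm : StrictMonoOn φ (Icc (0:ℝ) η) := by
    apply strictMonoOn_of_deriv_pos (convex_Icc 0 η)
    · intro s hs
      exact ((hδ (hmem s hs)).1.1.continuousAt).continuousWithinAt
    · intro s hs
      rw [interior_Icc] at hs
      have h1 := hδ (hmem s ⟨hs.1.le, hs.2.le⟩)
      rw [h1.1.1.deriv]
      have h2 : 0 < s⁻¹ * (φd s - φd 0) := by
        simpa [slope, vsub_eq_sub] using h1.2 (ne_of_gt hs.1)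
      rw [h0, sub_zero] at h2
      nlinarith [hs.1, h2, inv_pos.mpr hs.1]
  have hlt : φ 0 < φ η := hsm ⟨le_rfl, hηpos.le⟩ ⟨hηpos.le, le_rfl⟩ hηpos
  have hle : φ η ≤ φ 0 := (hδ (hmem η ⟨hηpos.le, le_rfl⟩)).1.2
  linarith

/-- Directional second derivative test at an interior local max. -/
lemma dir_second_nonpos {w : ℂ → ℝ} {z₀ v : ℂ}
    (hmax : IsLocalMax w z₀)
    (hev : ∀ᶠ x in 𝓝 z₀, HasFDerivAt w (fderiv ℝ w x) x)
    (hd1 : DifferentiableAt ℝ (fun x => fderiv ℝ w x v) z₀) :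
    fderiv ℝ (fun x => fderiv ℝ w x v) z₀ v ≤ 0 := by
  set ℓ : ℝ → ℂ := fun s => z₀ + s • v with hℓ
  have hℓ0 : ℓ 0 = z₀ := by simp [hℓ]
  have hℓd : ∀ s : ℝ, HasDerivAt ℓ v s := by
    intro s
    simpa [hℓ] using ((hasDerivAt_id s).smul_const v).const_add z₀
  have hℓc : Continuous ℓ := by
    continuity
  have hmax' : IsLocalMax (w ∘ ℓ) 0 := by
    have : Tendsto ℓ (𝓝 0) (𝓝 z₀) := hℓ0 ▸ hℓc.tendsto 0
    have h2 : ∀ᶠ (x : ℝ) in 𝓝 0, w (ℓ x) ≤ w z₀ := this.eventually hmax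
    have : (w ∘ ℓ) 0 = w z₀ := by simp [hℓ0]
    rw [IsLocalMax, IsMaxFilter, this]
    exact h2
  have hφ : ∀ᶠ s in 𝓝 (0:ℝ), HasDerivAt (w ∘ ℓ) (fderiv ℝ w (ℓ s) v) s := by
    have : Tendsto ℓ (𝓝 0) (𝓝 z₀) := hℓ0 ▸ hℓc.tendsto 0
    filter_upwards [this.eventually hev] with s hs
    exact hs.comp_hasDerivAt s (hℓd s)
  have hdd : HasDerivAt ((fun x => fderiv ℝ w x v) ∘ ℓ)
      (fderiv ℝ (fun x => fderiv ℝ w x v) z₀ v) 0 := by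
    have h3 : HasFDerivAt (fun x => fderiv ℝ w x v)
        (fderiv ℝ (fun x => fderiv ℝ w x v) z₀) (ℓ 0) := hℓ0 ▸ hd1.hasFDerivAt
    exact h3.comp_hasDerivAt 0 (hℓd 0)
  have := oneD_second_nonpos hmax' (by filter_upwards [hφ] with s hs; exact hs) hdd
  exact this

lemma hasFDerivAt_normSq (x : ℂ) :
    HasFDerivAt Complex.normSq
      ((2*x.re) • Complex.reCLM + (2*x.im) • Complex.imCLM) x := by
  have h1 := (Complex.reCLM.hasFDerivAt (x := x)).mul (Complex.reCLM.hasFDerivAt (x := x))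
  have h2 := (Complex.imCLM.hasFDerivAt (x := x)).mul (Complex.imCLM.hasFDerivAt (x := x))
  have h3 := h1.add h2
  have hfun : Complex.normSq = fun y : ℂ => Complex.reCLM y * Complex.reCLM y +
      Complex.imCLM y * Complex.imCLM y := by
    funext y; simp [Complex.normSq_apply]
  rw [hfun]
  refine h3.congr_fderiv ?_
  ext y
  simp [two_smul]
  ring

/-- differentiability of the directional derivative map on the open ball -/
lemma diffDeriv {u : ℂ → ℝ} {z : ℂ} (v : ℂ) (hu : ContDiffOn ℝ 2 u (ball (0:ℂ) 1))
    (hz : z ∈ ball (0:ℂ) 1) : DifferentiableAt ℝ (fun x => fderiv ℝ u x v) z := by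
  have h1 : ContDiffOn ℝ 1 (fun x => fderiv ℝ u x) (ball (0:ℂ) 1) :=
    hu.fderiv_of_isOpen isOpen_ball (by norm_num)
  have h2 : DifferentiableAt ℝ (fun x => fderiv ℝ u x) z :=
    (h1.differentiableOn one_ne_zero).differentiableAt (isOpen_ball.mem_nhds hz)
  exact ((ContinuousLinearMap.apply ℝ ℝ v).differentiableAt).comp z h2

/-- Maximum principle: a harmonic function that is `≤ 0` on the unit circle is `≤ 0`
on the closed unit disc. -/
lemma harmonic_le_zero {h : ℂ → ℝ}
    (hc : ContinuousOn h (closedBall (0:ℂ) 1))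
    (hd : ContDiffOn ℝ 2 h (ball (0:ℂ) 1))
    (hl : ∀ z ∈ ball (0:ℂ) 1,
      fderiv ℝ (fun w => fderiv ℝ h w 1) z 1 +
        fderiv ℝ (fun w => fderiv ℝ h w Complex.I) z Complex.I = 0)
    (hb : ∀ ζ ∈ sphere (0:ℂ) 1, h ζ ≤ 0) :
    ∀ z ∈ closedBall (0:ℂ) 1, h z ≤ 0 := by
  intro z hzK
  have key : ∀ ε > (0:ℝ), h z ≤ 0 + ε := by
    intro ε hε
    set w : ℂ → ℝ := fun x => h x + ε * Complex.normSq x with hw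
    have hwc : ContinuousOn w (closedBall (0:ℂ) 1) :=
      hc.add ((Complex.continuous_normSq.const_smul ε).continuousOn)
    obtain ⟨z₀, hz₀, hmax⟩ := (isCompact_closedBall (0:ℂ) 1).exists_isMaxOn
      ⟨0, by simp⟩ hwc
    have hz₀s : z₀ ∈ sphere (0:ℂ) 1 := by
      by_contra hns
      have hz₀b : z₀ ∈ ball (0:ℂ) 1 := by
        rw [mem_closedBall] at hz₀
        rw [mem_ball]
        rcases lt_or_eq_of_le hz₀ with h' | h'
        · exact h'
        · exact absurd h' hns
      have hmem𝓝 : ball (0:ℂ) 1 ∈ 𝓝 z₀ := isOpen_ball.mem_nhds hz₀b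
      have hloc : IsLocalMax w z₀ := by
        filter_upwards [hmem𝓝] with x hx
        exact hmax (ball_subset_closedBall hx)
      have hdiff : DifferentiableOn ℝ h (ball (0:ℂ) 1) := hd.differentiableOn two_ne_zero
      have hwdiff : ∀ x ∈ ball (0:ℂ) 1, DifferentiableAt ℝ w x := by
        intro x hx
        exact ((hdiff x hx).differentiableAt (isOpen_ball.mem_nhds hx)).add
          (((hasFDerivAt_normSq x).differentiableAt).const_mul ε)
      have hev : ∀ᶠ x in 𝓝 z₀, HasFDerivAt w (fderiv ℝ w x) x := by
        filter_upwards [hmem𝓝] with x hx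
        exact (hwdiff x hx).hasFDerivAt
      have hfder : ∀ x ∈ ball (0:ℂ) 1, fderiv ℝ w x
          = fderiv ℝ h x + ε • ((2*x.re) • Complex.reCLM + (2*x.im) • Complex.imCLM) := by
        intro x hx
        have hh := ((hdiff x hx).differentiableAt (isOpen_ball.mem_nhds hx)).hasFDerivAt
        have hq := (hasFDerivAt_normSq x).const_mul ε
        have := hh.add hq
        exact this.fderiv
      -- direction 1
      have key1 : fderiv ℝ (fun x => fderiv ℝ h x 1) z₀ 1 + 2*ε ≤ 0 := by
        have hD1 := diffDeriv (1:ℂ) hd hz₀b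
        have hq1 : HasFDerivAt (fun x : ℂ => ε * (2*x.re)) ((2*ε) • Complex.reCLM) z₀ := by
          have := (Complex.reCLM.hasFDerivAt (x := z₀)).const_mul (2*ε)
          refine this.congr_of_eventuallyEq (Filter.Eventually.of_forall fun y => ?_)
          simp; ring
        have hW1' : HasFDerivAt (fun x => fderiv ℝ h x 1 + ε * (2*x.re))
            (fderiv ℝ (fun x => fderiv ℝ h x 1) z₀ + (2*ε) • Complex.reCLM) z₀ :=
          hD1.hasFDerivAt.add hq1
        have hW1eq : (fun x => fderiv ℝ w x 1)
            =ᶠ[𝓝 z₀] (fun x => fderiv ℝ h x 1 + ε * (2*x.re)) := by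
          filter_upwards [hmem𝓝] with x hx
          rw [hfder x hx]
          simp
        have hdiffW1 : DifferentiableAt ℝ (fun x => fderiv ℝ w x 1) z₀ :=
          hW1eq.differentiableAt_iff.mpr hW1'.differentiableAt
        have := dir_second_nonpos hloc hev hdiffW1
        have heq : fderiv ℝ (fun x => fderiv ℝ w x 1) z₀ = fderiv ℝ (fun x => fderiv ℝ h x 1 + ε * (2*x.re)) z₀ :=
          hW1eq.fderiv_eq
        rw [heq, hW1'.fderiv] at this
        simpa using this
      -- direction I
      have keyI : fderiv ℝ (fun x => fderiv ℝ h x Complex.I) z₀ Complex.I + 2*ε ≤ 0 := by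
        have hDI := diffDeriv (Complex.I) hd hz₀b
        have hqI : HasFDerivAt (fun x : ℂ => ε * (2*x.im)) ((2*ε) • Complex.imCLM) z₀ := by
          have := (Complex.imCLM.hasFDerivAt (x := z₀)).const_mul (2*ε)
          refine this.congr_of_eventuallyEq (Filter.Eventually.of_forall fun y => ?_)
          simp; ring
        have hWI' : HasFDerivAt (fun x => fderiv ℝ h x Complex.I + ε * (2*x.im))
            (fderiv ℝ (fun x => fderiv ℝ h x Complex.I) z₀ + (2*ε) • Complex.imCLM) z₀ :=
          hDI.hasFDerivAt.add hqI
        have hWIeq : (fun x => fderiv ℝ w x Complex.I)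
            =ᶠ[𝓝 z₀] (fun x => fderiv ℝ h x Complex.I + ε * (2*x.im)) := by
          filter_upwards [hmem𝓝] with x hx
          rw [hfder x hx]
          simp
        have hdiffWI : DifferentiableAt ℝ (fun x => fderiv ℝ w x Complex.I) z₀ :=
          hWIeq.differentiableAt_iff.mpr hWI'.differentiableAt
        have := dir_second_nonpos hloc hev hdiffWI
        have heq : fderiv ℝ (fun x => fderiv ℝ w x Complex.I) z₀
            = fderiv ℝ (fun x => fderiv ℝ h x Complex.I + ε * (2*x.im)) z₀ :=
          hWIeq.fderiv_eq
        rw [heq, hWI'.fderiv] at this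
        simpa using this
      have hlap := hl z₀ hz₀b
      linarith
    -- z₀ on the sphere
    have hq0 : Complex.normSq z₀ = 1 := by
      have : ‖z₀‖ = 1 := by simpa [Complex.dist_eq] using hz₀s
      rw [← Complex.sq_norm, this]; norm_num
    have h1 : h z ≤ w z := by
      have : 0 ≤ Complex.normSq z := Complex.normSq_nonneg z
      simp only [hw]
      nlinarith
    have h2 : w z ≤ w z₀ := hmax hzK
    have h3 : w z₀ ≤ ε := by
      simp only [hw, hq0]
      have := hb z₀ hz₀s
      linarith
    linarith
  linarith [le_of_forall_pos_le_add key]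


noncomputable def pk (z : ℂ) (t : ℝ) : ℂ :=
  (circleMap 0 1 t + z) / (circleMap 0 1 t - z)

lemma cm_abs (t : ℝ) : ‖(circleMap 0 1 t)‖ = 1 := by
  simp [norm_circleMap_zero]

lemma cm_normSq (t : ℝ) : Complex.normSq (circleMap 0 1 t) = 1 := by
  rw [← Complex.sq_norm, cm_abs]; norm_num

lemma cm_ne {z : ℂ} (hz : ‖z‖ < 1) (t : ℝ) : circleMap 0 1 t - z ≠ 0 := by
  intro h
  rw [sub_eq_zero] at h
  rw [← h, cm_abs] at hz
  exact lt_irrefl _ hz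

lemma cm_ne0 (t : ℝ) : circleMap 0 1 t ≠ 0 := by
  intro h
  have := cm_abs t
  rw [h] at this
  simp at this

lemma pk_re {z : ℂ} (hz : ‖z‖ < 1) (t : ℝ) :
    (pk z t).re = (1 - Complex.normSq z) / Complex.normSq (circleMap 0 1 t - z) := by
  have h1 := cm_normSq t
  rw [pk, Complex.div_re, ← add_div]
  congr 1
  simp only [Complex.normSq_apply, Complex.add_re, Complex.add_im, Complex.sub_re,
    Complex.sub_im] at *
  ring_nf
  ring_nf at h1
  linarith

lemma pk_re_nonneg {z : ℂ} (hz : ‖z‖ < 1) (t : ℝ) : 0 ≤ (pk z t).re := by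
  rw [pk_re hz]
  apply div_nonneg _ (Complex.normSq_nonneg _)
  have : Complex.normSq z < 1 := by
    rw [← Complex.sq_norm]
    nlinarith [norm_nonneg z]
  linarith

lemma pk_cont {z : ℂ} (hz : ‖z‖ < 1) : Continuous (fun t => pk z t) := by
  apply Continuous.div
  · exact (continuous_circleMap 0 1).add continuous_const
  · exact (continuous_circleMap 0 1).sub continuous_const
  · exact fun t => cm_ne hz t

lemma pk_integral {z : ℂ} (hz : ‖z‖ < 1) :
    ∫ t in (0:ℝ)..(2*π), pk z t = 2*π := by
  have hzball : z ∈ ball (0:ℂ) 1 := by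
    simpa [Complex.dist_eq] using hz
  have e1 := circleIntegral.integral_sub_inv_of_mem_ball hzball
  have e0 := circleIntegral.integral_sub_inv_of_mem_ball (show (0:ℂ) ∈ ball (0:ℂ) 1 by simp)
  simp only [circleIntegral, deriv_circleMap, smul_eq_mul] at e1 e0
  have hpt : ∀ t ∈ uIcc (0:ℝ) (2*π), pk z t = (Complex.I)⁻¹ *
      ((2:ℂ) * ((circleMap 0 1 t * Complex.I) * (circleMap 0 1 t - z)⁻¹)
        - (circleMap 0 1 t * Complex.I) * (circleMap 0 1 t - 0)⁻¹) := by
    intro t _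
    have h1 := cm_ne hz t
    have h0 := cm_ne0 t
    rw [pk]
    field_simp
    linear_combination
  rw [intervalIntegral.integral_congr hpt]
  have i1 : IntervalIntegrable
      (fun t => (circleMap 0 1 t * Complex.I) * (circleMap 0 1 t - z)⁻¹) volume 0 (2*π) := by
    apply Continuous.intervalIntegrable
    exact ((continuous_circleMap 0 1).mul continuous_const).mul
      (((continuous_circleMap 0 1).sub continuous_const).inv₀ (fun t => cm_ne hz t))
  have i0 : IntervalIntegrable
      (fun t => (circleMap 0 1 t * Complex.I) * (circleMap 0 1 t - 0)⁻¹) volume 0 (2*π) := by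
    apply Continuous.intervalIntegrable
    exact ((continuous_circleMap 0 1).mul continuous_const).mul
      (((continuous_circleMap 0 1).sub continuous_const).inv₀
        (fun t => by simpa using cm_ne0 t))
  rw [intervalIntegral.integral_const_mul]
  rw [intervalIntegral.integral_sub ((i1.const_mul (2:ℂ))) i0]
  rw [intervalIntegral.integral_const_mul, e1, e0]
  have hI : (Complex.I : ℂ) ≠ 0 := Complex.I_ne_zero
  field_simp
  linear_combination

lemma pk_re_integral {z : ℂ} (hz : ‖z‖ < 1) :
    ∫ t in (0:ℝ)..(2*π), (pk z t).re = 2*π := by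
  have h := pk_integral hz
  have h2 : ∫ t in (0:ℝ)..(2*π), (pk z t).re
      = (∫ t in (0:ℝ)..(2*π), pk z t).re := by
    have := Complex.reCLM.intervalIntegral_comp_comm
      ((pk_cont hz).intervalIntegrable (μ := volume) 0 (2*π))
    simpa using this
  rw [h2, h]
  simp

noncomputable def Gfun (θ : ℂ → ℝ) : ℂ → ℂ := fun w =>
  (2 * (π:ℂ) * Complex.I)⁻¹ • ∮ ζ in C(0, (1:ℝ)), (ζ - w)⁻¹ • ((2:ℂ) * (θ ζ : ℂ))

noncomputable def c₀ (θ : ℂ → ℝ) : ℂ :=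
  -(2 * (π:ℂ) * Complex.I)⁻¹ * ∮ ζ in C(0, (1:ℝ)), (ζ - 0)⁻¹ • ((θ ζ : ℂ))

lemma theta_cont_circ {θ : ℂ → ℝ} (hθ : ContinuousOn θ (sphere 0 1)) :
    Continuous (fun t => θ (circleMap 0 1 t)) := by
  apply hθ.comp_continuous (continuous_circleMap 0 1)
  intro t
  simpa [Complex.dist_eq] using cm_abs t

lemma theta_circleIntegrable {θ : ℂ → ℝ} (hθ : ContinuousOn θ (sphere 0 1)) :
    CircleIntegrable (fun ζ => ((θ ζ : ℂ))) 0 1 := by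
  apply ContinuousOn.circleIntegrable zero_le_one
  exact Complex.continuous_ofReal.comp_continuousOn hθ

lemma G_analytic {θ : ℂ → ℝ} (hθ : ContinuousOn θ (sphere 0 1)) :
    AnalyticOnNhd ℂ (Gfun θ) (ball (0:ℂ) 1) := by
  have hint : CircleIntegrable (fun ζ => (2:ℂ) * (θ ζ : ℂ)) 0 1 := by
    apply ContinuousOn.circleIntegrable zero_le_one
    exact continuousOn_const.mul (Complex.continuous_ofReal.comp_continuousOn hθ)
  have hps := hasFPowerSeriesOn_cauchy_integral (R := (1:NNReal)) (by simpa using hint) one_pos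
  intro z hz
  have hz' : z ∈ Metric.eball (0:ℂ) ((1:NNReal):ENNReal) := by
    rw [Metric.emetric_ball_nnreal]
    simpa using hz
  have := hps.analyticAt_of_mem hz'
  have heq : Gfun θ = fun w =>
      (2 * (π:ℂ) * Complex.I)⁻¹ • ∮ ζ in C(0, ((1:NNReal):ℝ)), (ζ - w)⁻¹ • ((2:ℂ) * (θ ζ : ℂ)) := by
    funext w; simp [Gfun]
  rw [heq]
  exact this

lemma G_repr {θ : ℂ → ℝ} (hθ : ContinuousOn θ (sphere 0 1)) {z : ℂ} (hz : ‖z‖ < 1) :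
    Gfun θ z + c₀ θ
      = ((2*π:ℝ):ℂ)⁻¹ * ∫ t in (0:ℝ)..(2*π), pk z t * (θ (circleMap 0 1 t) : ℂ) := by
  have hθc : Continuous fun t => ((θ (circleMap 0 1 t) : ℂ)) :=
    Complex.continuous_ofReal.comp (theta_cont_circ hθ)
  set A : ℝ → ℂ := fun t => circleMap 0 1 t * Complex.I *
    ((circleMap 0 1 t - z)⁻¹ * ((2:ℂ) * (θ (circleMap 0 1 t) : ℂ))) with hAdef
  set B : ℝ → ℂ := fun t => circleMap 0 1 t * Complex.I *
    ((circleMap 0 1 t - 0)⁻¹ * ((θ (circleMap 0 1 t) : ℂ))) with hBdef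
  have hAc : Continuous A := by
    apply ((continuous_circleMap 0 1).mul continuous_const).mul
    exact (((continuous_circleMap 0 1).sub continuous_const).inv₀ (fun t => cm_ne hz t)).mul
      (continuous_const.mul hθc)
  have hBc : Continuous B := by
    apply ((continuous_circleMap 0 1).mul continuous_const).mul
    exact (((continuous_circleMap 0 1).sub continuous_const).inv₀
      (fun t => by simpa using cm_ne0 t)).mul hθc
  have hpt : ∀ t ∈ uIcc (0:ℝ) (2*π),
      pk z t * (θ (circleMap 0 1 t) : ℂ) = Complex.I⁻¹ * (A t - B t) := by
    intro t _
    have h1 := cm_ne hz t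
    have h0 := cm_ne0 t
    rw [pk, hAdef, hBdef]
    simp only
    field_simp
    linear_combination
  have hGI : Gfun θ z = (2 * (π:ℂ) * Complex.I)⁻¹ * ∫ t in (0:ℝ)..(2*π), A t := by
    simp only [Gfun, circleIntegral, deriv_circleMap, smul_eq_mul, hAdef]
  have hCI : c₀ θ = -(2 * (π:ℂ) * Complex.I)⁻¹ * ∫ t in (0:ℝ)..(2*π), B t := by
    simp only [c₀, circleIntegral, deriv_circleMap, smul_eq_mul, hBdef]
  rw [intervalIntegral.integral_congr hpt, intervalIntegral.integral_const_mul,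
    intervalIntegral.integral_sub (hAc.intervalIntegrable 0 (2*π)) (hBc.intervalIntegrable 0 (2*π)),
    hGI, hCI]
  have hI : (Complex.I : ℂ) ≠ 0 := Complex.I_ne_zero
  have hπ : ((π:ℂ)) ≠ 0 := by
    simpa using Real.pi_ne_zero
  set IA := ∫ t in (0:ℝ)..(2*π), A t with hIA
  set IB := ∫ t in (0:ℝ)..(2*π), B t with hIB
  push_cast
  field_simp
  linear_combination

lemma f_repr {θ : ℂ → ℝ} (hθ : ContinuousOn θ (sphere 0 1)) {z : ℂ} (hz : ‖z‖ < 1) :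
    (Gfun θ z + c₀ θ).re
      = (2*π)⁻¹ * ∫ t in (0:ℝ)..(2*π), (pk z t).re * θ (circleMap 0 1 t) := by
  rw [G_repr hθ hz]
  have hcont : Continuous fun t => pk z t * ((θ (circleMap 0 1 t) : ℂ)) :=
    (pk_cont hz).mul (Complex.continuous_ofReal.comp (theta_cont_circ hθ))
  have h2 : ∫ t in (0:ℝ)..(2*π), (pk z t * ((θ (circleMap 0 1 t) : ℂ))).re
      = (∫ t in (0:ℝ)..(2*π), pk z t * ((θ (circleMap 0 1 t) : ℂ))).re := by
    have := Complex.reCLM.intervalIntegral_comp_comm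
      (hcont.intervalIntegrable (μ := volume) 0 (2*π))
    simpa using this
  rw [← Complex.ofReal_inv]
  rw [Complex.re_ofReal_mul]
  rw [← h2]
  push_cast
  congr 1
  apply intervalIntegral.integral_congr
  intro t _
  simp [Complex.mul_re]

lemma pk_re_le {z z₀ : ℂ} (hz : ‖z‖ < 1) (hz₀ : ‖z₀‖ = 1) {t δ : ℝ}
    (hδ : 0 < δ) (hfar : δ ≤ dist (circleMap 0 1 t) z₀) (hnear : dist z z₀ ≤ δ/2) :
    (pk z t).re ≤ 8 * dist z z₀ / δ^2 := by
  rw [pk_re hz]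
  have hd1 : dist (circleMap 0 1 t) z₀ ≤ dist (circleMap 0 1 t) z + dist z z₀ :=
    dist_triangle _ _ _
  have h1 : δ/2 ≤ ‖(circleMap 0 1 t - z)‖ := by
    rw [← Complex.dist_eq]
    linarith
  have h2 : (δ/2)^2 ≤ Complex.normSq (circleMap 0 1 t - z) := by
    rw [← Complex.sq_norm]
    have := norm_nonneg (circleMap 0 1 t - z)
    nlinarith
  have h3 : 1 - Complex.normSq z ≤ 2 * dist z z₀ := by
    have habs : ‖z₀‖ - ‖z‖ ≤ ‖(z₀ - z)‖ := by
      simpa using norm_sub_norm_le z₀ z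
    have hdist : dist z z₀ = ‖(z₀ - z)‖ := by
      rw [Complex.dist_eq, norm_sub_rev]
    have hns : Complex.normSq z = ‖z‖ ^ 2 := (Complex.sq_norm z).symm
    nlinarith [norm_nonneg z]
  calc (1 - Complex.normSq z) / Complex.normSq (circleMap 0 1 t - z)
      ≤ 2 * dist z z₀ / ((δ/2)^2) := by
        apply div_le_div₀ (by positivity) h3 (by positivity) h2
    _ = 8 * dist z z₀ / δ^2 := by
        field_simp
        ring

lemma harmonic_of_analytic {H : ℂ → ℂ} {u : ℂ → ℝ}
    (hH : AnalyticOnNhd ℂ H (ball (0:ℂ) 1))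
    (hu : ∀ z ∈ ball (0:ℂ) 1, u z = (H z).re) :
    ContDiffOn ℝ 2 u (ball (0:ℂ) 1) ∧
      ∀ z ∈ ball (0:ℂ) 1,
        fderiv ℝ (fun w => fderiv ℝ u w 1) z 1 +
          fderiv ℝ (fun w => fderiv ℝ u w Complex.I) z Complex.I = 0 := by
  have hball : IsOpen (ball (0:ℂ) 1) := isOpen_ball
  have hev : ∀ z ∈ ball (0:ℂ) 1, u =ᶠ[𝓝 z] fun y => (H y).re := by
    intro z hz
    filter_upwards [hball.mem_nhds hz] with y hy
    exact hu y hy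
  -- first derivatives
  have hD : ∀ z ∈ ball (0:ℂ) 1, ∀ v : ℂ, fderiv ℝ u z v = (deriv H z * v).re := by
    intro z hz v
    have hder : HasDerivAt H (deriv H z) z := ((hH z hz).differentiableAt).hasDerivAt
    have hre : HasFDerivAt (fun y => (H y).re)
        (Complex.reCLM.comp ((deriv H z) • (1 : ℂ →L[ℝ] ℂ))) z :=
      Complex.reCLM.hasFDerivAt.comp z hder.complexToReal_fderiv
    have hu' : HasFDerivAt u (Complex.reCLM.comp ((deriv H z) • (1 : ℂ →L[ℝ] ℂ))) z :=
      hre.congr_of_eventuallyEq (hev z hz)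
    rw [hu'.fderiv]
    simp [smul_eq_mul]
  constructor
  · intro z hz
    have hc : ContDiffAt ℝ 2 (fun y => (H y).re) z := by
      have h1 : ContDiffAt ℂ 2 H z := (hH z hz).contDiffAt
      exact Complex.reCLM.contDiff.contDiffAt.comp z (h1.restrict_scalars ℝ)
    exact (hc.congr_of_eventuallyEq (hev z hz)).contDiffWithinAt
  · intro z hz
    have hdH : AnalyticOnNhd ℂ (deriv H) (ball (0:ℂ) 1) := hH.deriv
    have hd2 : HasDerivAt (deriv H) (deriv (deriv H) z) z :=
      ((hdH z hz).differentiableAt).hasDerivAt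
    -- direction 1
    have he1 : (fun w => fderiv ℝ u w 1) =ᶠ[𝓝 z] fun w => (deriv H w).re := by
      filter_upwards [hball.mem_nhds hz] with y hy
      rw [hD y hy 1, mul_one]
    have hf1 : HasFDerivAt (fun w => (deriv H w).re)
        (Complex.reCLM.comp ((deriv (deriv H) z) • (1 : ℂ →L[ℝ] ℂ))) z :=
      Complex.reCLM.hasFDerivAt.comp z hd2.complexToReal_fderiv
    have hg1 : fderiv ℝ (fun w => fderiv ℝ u w 1) z 1
        = (deriv (deriv H) z).re := by
      rw [he1.fderiv_eq, hf1.fderiv]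
      simp [smul_eq_mul]
    -- direction I
    have heI : (fun w => fderiv ℝ u w Complex.I)
        =ᶠ[𝓝 z] fun w => (deriv H w * Complex.I).re := by
      filter_upwards [hball.mem_nhds hz] with y hy
      rw [hD y hy Complex.I]
    have hd2I : HasDerivAt (fun w => deriv H w * Complex.I)
        (deriv (deriv H) z * Complex.I) z := hd2.mul_const Complex.I
    have hfI : HasFDerivAt (fun w => (deriv H w * Complex.I).re)
        (Complex.reCLM.comp ((deriv (deriv H) z * Complex.I) • (1 : ℂ →L[ℝ] ℂ))) z :=
      Complex.reCLM.hasFDerivAt.comp z hd2I.complexToReal_fderiv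
    have hgI : fderiv ℝ (fun w => fderiv ℝ u w Complex.I) z Complex.I
        = (deriv (deriv H) z * Complex.I * Complex.I).re := by
      rw [heI.fderiv_eq, hfI.fderiv]
      simp [smul_eq_mul]
    rw [hg1, hgI]
    have : deriv (deriv H) z * Complex.I * Complex.I = - deriv (deriv H) z := by
      rw [mul_assoc, Complex.I_mul_I, mul_neg_one]
    rw [this]
    simp

lemma lap_sub {u₁ u₂ : ℂ → ℝ} (h1 : ContDiffOn ℝ 2 u₁ (ball (0:ℂ) 1))
    (h2 : ContDiffOn ℝ 2 u₂ (ball (0:ℂ) 1)) {z : ℂ} (hz : z ∈ ball (0:ℂ) 1) (v : ℂ) :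
    fderiv ℝ (fun w => fderiv ℝ (fun x => u₁ x - u₂ x) w v) z v =
      fderiv ℝ (fun w => fderiv ℝ u₁ w v) z v - fderiv ℝ (fun w => fderiv ℝ u₂ w v) z v := by
  have hev : (fun w => fderiv ℝ (fun x => u₁ x - u₂ x) w v)
      =ᶠ[𝓝 z] (fun w => fderiv ℝ u₁ w v - fderiv ℝ u₂ w v) := by
    filter_upwards [isOpen_ball.mem_nhds hz] with y hy
    have d1 : DifferentiableAt ℝ u₁ y :=
      (h1.differentiableOn two_ne_zero y hy).differentiableAt (isOpen_ball.mem_nhds hy)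
    have d2 : DifferentiableAt ℝ u₂ y :=
      (h2.differentiableOn two_ne_zero y hy).differentiableAt (isOpen_ball.mem_nhds hy)
    rw [fderiv_fun_sub d1 d2]
    simp
  rw [hev.fderiv_eq, fderiv_fun_sub (diffDeriv v h1 hz) (diffDeriv v h2 hz)]
  simp

theorem stmt12 (θ : ℂ → ℝ)
    (hθ : ContinuousOn θ (Metric.sphere 0 1)) :
    ∃ f : ℂ → ℝ,
      (ContinuousOn f (Metric.closedBall 0 1) ∧
        HarmonicOn f (Metric.ball 0 1) ∧
        ∀ ζ ∈ Metric.sphere (0 : ℂ) 1, f ζ = θ ζ) ∧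
      ∀ g : ℂ → ℝ,
        (ContinuousOn g (Metric.closedBall 0 1) ∧
          HarmonicOn g (Metric.ball 0 1) ∧
          ∀ ζ ∈ Metric.sphere (0 : ℂ) 1, g ζ = θ ζ) →
        ∀ z ∈ Metric.closedBall (0 : ℂ) 1, g z = f z := by
  classical
  set f : ℂ → ℝ := fun z => if ‖z‖ < 1 then (Gfun θ z + c₀ θ).re else θ z with hf
  have hball_iff : ∀ z : ℂ, z ∈ ball (0:ℂ) 1 ↔ ‖z‖ < 1 := by
    intro z; simp [mem_ball, Complex.dist_eq]
  have hsphere_abs : ∀ ζ ∈ sphere (0:ℂ) 1, ‖ζ‖ = 1 := by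
    intro ζ h; simpa [Complex.dist_eq] using h
  have hfball : ∀ z ∈ ball (0:ℂ) 1, f z = (Gfun θ z + c₀ θ).re := by
    intro z hz
    rw [hf]
    simp only
    rw [if_pos ((hball_iff z).mp hz)]
  have hfsphere : ∀ ζ ∈ sphere (0:ℂ) 1, f ζ = θ ζ := by
    intro ζ h
    rw [hf]
    simp only
    rw [if_neg (by rw [hsphere_abs ζ h]; exact lt_irrefl 1)]
  have hH : AnalyticOnNhd ℂ (fun z => Gfun θ z + c₀ θ) (ball (0:ℂ) 1) :=
    fun z hz => ((G_analytic hθ) z hz).add analyticAt_const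
  have hharm := harmonic_of_analytic hH hfball
  have hfharm : HarmonicOn f (ball 0 1) := ⟨hharm.1, hharm.2⟩
  -- continuity on the closed ball
  have hfcont : ContinuousOn f (closedBall (0:ℂ) 1) := by
    intro z hzK
    by_cases hzb : ‖z‖ < 1
    · have hzball : z ∈ ball (0:ℂ) 1 := (hball_iff z).mpr hzb
      have hHc : ContinuousAt (fun w => (Gfun θ w + c₀ θ).re) z :=
        Complex.continuous_re.continuousAt.comp (hH z hzball).differentiableAt.continuousAt
      have : ContinuousAt f z := by
        apply hHc.congr
        filter_upwards [isOpen_ball.mem_nhds hzball] with y hy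
        exact (hfball y hy).symm
      exact this.continuousWithinAt
    · have hz1 : ‖z‖ = 1 :=
        le_antisymm (by simpa [mem_closedBall, Complex.dist_eq] using hzK) (not_lt.mp hzb)
      have hzs : z ∈ sphere (0:ℂ) 1 := by simp [Complex.dist_eq, hz1]
      rw [Metric.continuousWithinAt_iff]
      intro ε hε
      obtain ⟨C, hC⟩ := (isCompact_sphere (0:ℂ) 1).exists_bound_of_continuousOn hθ
      set M := max C 1 with hMdef
      have hM1 : (1:ℝ) ≤ M := le_max_right _ _
      have hM0 : (0:ℝ) < M := by linarith
      have hMb : ∀ ζ ∈ sphere (0:ℂ) 1, |θ ζ| ≤ M := by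
        intro ζ h
        exact le_trans (by simpa using hC ζ h) (le_max_left _ _)
      have hθz := hθ z hzs
      rw [Metric.continuousWithinAt_iff] at hθz
      obtain ⟨δ, hδpos, hδ⟩ := hθz (ε/3) (by positivity)
      refine ⟨min (δ/2) (ε/3 * δ^2/(16*M)), by positivity, ?_⟩
      intro x hxK hxd
      have hxd2 : dist x z ≤ δ/2 := (lt_of_lt_of_le hxd (min_le_left _ _)).le
      have hfz : f z = θ z := hfsphere z hzs
      by_cases hxb : ‖x‖ < 1
      · -- Poisson kernel estimate
        set d := dist x z with hddef
        have hd0 : 0 ≤ d := dist_nonneg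
        have hfx : f x = (2*π)⁻¹ * ∫ t in (0:ℝ)..(2*π), (pk x t).re * θ (circleMap 0 1 t) := by
          rw [hfball x ((hball_iff x).mpr hxb), f_repr hθ hxb]
        have hcontpk : Continuous fun t => (pk x t).re :=
          Complex.continuous_re.comp (pk_cont hxb)
        have hcont1 : Continuous fun t => (pk x t).re * θ (circleMap 0 1 t) :=
          hcontpk.mul (theta_cont_circ hθ)
        have hcontΔ : Continuous fun t => (pk x t).re * (θ (circleMap 0 1 t) - θ z) :=
          hcontpk.mul ((theta_cont_circ hθ).sub continuous_const)
        have hsub : f x - θ z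
            = (2*π)⁻¹ * ∫ t in (0:ℝ)..(2*π), (pk x t).re * (θ (circleMap 0 1 t) - θ z) := by
          have hsplit : ∫ t in (0:ℝ)..(2*π), (pk x t).re * (θ (circleMap 0 1 t) - θ z)
              = (∫ t in (0:ℝ)..(2*π), (pk x t).re * θ (circleMap 0 1 t))
                - ∫ t in (0:ℝ)..(2*π), (pk x t).re * θ z := by
            rw [← intervalIntegral.integral_sub (hcont1.intervalIntegrable 0 (2*π))
              ((show Continuous fun t => (pk x t).re * θ z from hcontpk.mul continuous_const).intervalIntegrable 0 (2*π))]
            apply intervalIntegral.integral_congr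
            intro t _
            ring
          have hconst : ∫ t in (0:ℝ)..(2*π), (pk x t).re * θ z = 2*π * θ z := by
            rw [intervalIntegral.integral_mul_const, pk_re_integral hxb]
          have h2π : (2*π) ≠ 0 := by positivity
          rw [hsplit, hconst, hfx]
          field_simp
          try ring
        have hptbd : ∀ t ∈ Icc (0:ℝ) (2*π),
            |(pk x t).re * (θ (circleMap 0 1 t) - θ z)|
              ≤ (ε/3) * (pk x t).re + 16*M*d/δ^2 := by
          intro t _
          have hpknn := pk_re_nonneg hxb t
          have hcm : circleMap 0 1 t ∈ sphere (0:ℂ) 1 := by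
            simp [Complex.dist_eq, cm_abs t]
          have habs_eq : |(pk x t).re * (θ (circleMap 0 1 t) - θ z)|
              = (pk x t).re * |θ (circleMap 0 1 t) - θ z| := by
            rw [abs_mul, _root_.abs_of_nonneg hpknn]
          rw [habs_eq]
          by_cases hct : dist (circleMap 0 1 t) z < δ
          · have hΔ : |θ (circleMap 0 1 t) - θ z| ≤ ε/3 := by
              have := hδ hcm hct
              rw [Real.dist_eq] at this
              linarith
            have hterm2 : 0 ≤ 16*M*d/δ^2 := by positivity
            nlinarith
          · have hfar : δ ≤ dist (circleMap 0 1 t) z := not_lt.mp hct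
            have hpk := pk_re_le hxb hz1 hδpos hfar hxd2
            have hΔ : |θ (circleMap 0 1 t) - θ z| ≤ 2*M := by
              have h1 := hMb _ hcm
              have h2 := hMb z hzs
              calc |θ (circleMap 0 1 t) - θ z| ≤ |θ (circleMap 0 1 t)| + |θ z| := abs_sub _ _
                _ ≤ 2*M := by linarith
            have hstep : (pk x t).re * |θ (circleMap 0 1 t) - θ z|
                ≤ (8*d/δ^2) * (2*M) := by
              calc (pk x t).re * |θ (circleMap 0 1 t) - θ z|
                  ≤ (8*d/δ^2) * |θ (circleMap 0 1 t) - θ z| :=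
                    mul_le_mul_of_nonneg_right hpk (abs_nonneg _)
                _ ≤ (8*d/δ^2) * (2*M) :=
                    mul_le_mul_of_nonneg_left hΔ (by positivity)
            have heq : (8*d/δ^2) * (2*M) = 16*M*d/δ^2 := by ring
            have hε3 : 0 ≤ (ε/3) * (pk x t).re := by positivity
            linarith [hstep, heq ▸ hstep]
        have habs : |∫ t in (0:ℝ)..(2*π), (pk x t).re * (θ (circleMap 0 1 t) - θ z)|
            ≤ ∫ t in (0:ℝ)..(2*π), ((ε/3) * (pk x t).re + 16*M*d/δ^2) := by
          calc |∫ t in (0:ℝ)..(2*π), (pk x t).re * (θ (circleMap 0 1 t) - θ z)|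
              ≤ ∫ t in (0:ℝ)..(2*π), |(pk x t).re * (θ (circleMap 0 1 t) - θ z)| :=
                intervalIntegral.abs_integral_le_integral_abs (by positivity)
            _ ≤ _ := by
                apply intervalIntegral.integral_mono_on (by positivity)
                  (hcontΔ.abs.intervalIntegrable 0 (2*π))
                  (((continuous_const.mul hcontpk).add continuous_const).intervalIntegrable 0 (2*π))
                  hptbd
        have hrhs : ∫ t in (0:ℝ)..(2*π), ((ε/3) * (pk x t).re + 16*M*d/δ^2)
            = (ε/3)*(2*π) + (2*π)*(16*M*d/δ^2) := by
          rw [intervalIntegral.integral_add ((hcontpk.intervalIntegrable 0 (2*π)).const_mul (ε/3))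
            (intervalIntegrable_const), intervalIntegral.integral_const_mul, pk_re_integral hxb,
            intervalIntegral.integral_const]
          try simp
          try ring
        have hfinal : |f x - θ z| ≤ ε/3 + 16*M*d/δ^2 := by
          rw [hsub, abs_mul, _root_.abs_of_nonneg (show (0:ℝ) ≤ (2*π)⁻¹ by positivity)]
          have h2π : (0:ℝ) < 2*π := by positivity
          calc (2*π)⁻¹ * |∫ t in (0:ℝ)..(2*π), (pk x t).re * (θ (circleMap 0 1 t) - θ z)|
              ≤ (2*π)⁻¹ * ((ε/3)*(2*π) + (2*π)*(16*M*d/δ^2)) :=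
                mul_le_mul_of_nonneg_left (le_trans habs hrhs.le) (by positivity)
            _ = ε/3 + 16*M*d/δ^2 := by field_simp
        have hdsmall : 16*M*d/δ^2 < ε/3 := by
          have hd : d < ε/3 * δ^2/(16*M) := lt_of_lt_of_le hxd (min_le_right _ _)
          have heq : 16*M*d/δ^2 = (16*M/δ^2)*d := by ring
          rw [heq]
          have h2 : (16*M/δ^2) * d < (16*M/δ^2) * (ε/3*δ^2/(16*M)) :=
            mul_lt_mul_of_pos_left hd (by positivity)
          have h3 : (16*M/δ^2) * (ε/3*δ^2/(16*M)) = ε/3 := by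
            field_simp
            try ring
          linarith
        rw [Real.dist_eq, hfz]
        linarith
      · have hx1 : ‖x‖ = 1 :=
          le_antisymm (by simpa [mem_closedBall, Complex.dist_eq] using hxK) (not_lt.mp hxb)
        have hxs : x ∈ sphere (0:ℂ) 1 := by simp [Complex.dist_eq, hx1]
        rw [hfz, hfsphere x hxs]
        have hlt : dist x z < δ := lt_of_le_of_lt hxd2 (by linarith)
        have := hδ hxs hlt
        linarith
  refine ⟨f, ⟨hfcont, hfharm, hfsphere⟩, ?_⟩
  rintro g ⟨hgc, hgh, hgb⟩ z hz
  -- uniqueness via the maximum principle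
  have main : ∀ u₁ u₂ : ℂ → ℝ, ContinuousOn u₁ (closedBall (0:ℂ) 1) →
      ContinuousOn u₂ (closedBall (0:ℂ) 1) → HarmonicOn u₁ (ball (0:ℂ) 1) →
      HarmonicOn u₂ (ball (0:ℂ) 1) → (∀ ζ ∈ sphere (0:ℂ) 1, u₁ ζ = θ ζ) →
      (∀ ζ ∈ sphere (0:ℂ) 1, u₂ ζ = θ ζ) → ∀ x ∈ closedBall (0:ℂ) 1, u₁ x - u₂ x ≤ 0 := by
    intro u₁ u₂ hc1 hc2 hh1 hh2 hb1 hb2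
    apply harmonic_le_zero
    · exact hc1.sub hc2
    · exact hh1.1.sub hh2.1
    · intro w hw
      rw [lap_sub hh1.1 hh2.1 hw 1, lap_sub hh1.1 hh2.1 hw Complex.I]
      have e1 := hh1.2 w hw
      have e2 := hh2.2 w hw
      linarith
    · intro ζ hζ
      rw [hb1 ζ hζ, hb2 ζ hζ]
      simp
  have h1 := main g f hgc hfcont hgh hfharm hgb hfsphere z hz
  have h2 := main f g hfcont hgc hfharm hgh hfsphere hgb z hz
  linarith
end
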